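/- Let U, V, W be real-valued random variables with a joint distribution. If for every α ∈ [0,1] the conditional α-quantile of U given (V,W) equals the conditional α-quantile of U given W alone, then U and V are conditionally independent given W. -/

import Mathlib

open MeasureTheory ProbabilityTheory

open MeasureTheory ProbabilityTheory Set Filter
open scoped ENNReal Topology

lemma key_not_lt (ν₁ ν₂ : Measure ℝ) [IsProbabilityMeasure ν₁] [IsProbabilityMeasure ν₂]
    (h : ∀ q : ℚ, (q:ℝ) ∈ Set.Icc (0:ℝ) 1 →
      sInf {t : ℝ | ENNReal.ofReal (q:ℝ) ≤ ν₁ (Set.Iic t)} =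
      sInf {t : ℝ | ENNReal.ofReal (q:ℝ) ≤ ν₂ (Set.Iic t)}) (t : ℝ) :
    ¬ ν₁ (Set.Iic t) < ν₂ (Set.Iic t) := by
  intro hlt
  have h1 : ν₁ (Iic t) ≠ ⊤ := measure_ne_top _ _
  have h2 : ν₂ (Iic t) ≠ ⊤ := measure_ne_top _ _
  obtain ⟨q, hq1, hq2⟩ := exists_rat_btwn ((ENNReal.toReal_lt_toReal h1 h2).2 hlt)
  have hq0 : 0 < (q:ℝ) := lt_of_le_of_lt ENNReal.toReal_nonneg hq1
  have hle1 : (ν₂ (Iic t)).toReal ≤ 1 := by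
    have := ENNReal.toReal_mono (by simp : (1:ℝ≥0∞) ≠ ⊤) (prob_le_one (μ := ν₂) (s := Iic t))
    simpa using this
  have hqlt1 : (q:ℝ) < 1 := lt_of_lt_of_le hq2 hle1
  have hlow : ν₁ (Iic t) < ENNReal.ofReal q := (ENNReal.lt_ofReal_iff_toReal_lt h1).2 hq1
  have hhigh : ENNReal.ofReal q ≤ ν₂ (Iic t) :=
    ((ENNReal.ofReal_lt_iff_lt_toReal hq0.le h2).2 hq2).le
  have heq := h q ⟨hq0.le, hqlt1.le⟩
  -- Step A : sInf S₂ ≤ t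
  have hiInter : (⋂ n : ℕ, Iic (-(n:ℝ))) = (∅ : Set ℝ) := by
    ext x
    simp only [mem_iInter, mem_Iic, mem_empty_iff_false, iff_false, not_forall, not_le]
    obtain ⟨n, hn⟩ := exists_nat_gt (-x)
    exact ⟨n, by linarith⟩
  have htend2 : Tendsto (fun n : ℕ => ν₂ (Iic (-(n:ℝ)))) atTop (𝓝 0) := by
    have := tendsto_measure_iInter_atTop (μ := ν₂) (s := fun n : ℕ => Iic (-(n:ℝ)))
      (fun n => nullMeasurableSet_Iic)
      (fun m n hmn => Iic_subset_Iic.2 (by exact_mod_cast neg_le_neg (Nat.cast_le.2 hmn)))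
      ⟨0, measure_ne_top _ _⟩
    rw [hiInter] at this
    simpa [Function.comp_def] using this
  obtain ⟨n₀, hn₀⟩ := (htend2.eventually_lt_const (ENNReal.ofReal_pos.2 hq0)).exists
  have hbdd : BddBelow {s : ℝ | ENNReal.ofReal (q:ℝ) ≤ ν₂ (Set.Iic s)} := by
    refine ⟨-(n₀:ℝ), fun s hs => ?_⟩
    by_contra hcon
    push_neg at hcon
    exact absurd (le_trans hs (measure_mono (Iic_subset_Iic.2 hcon.le))) (not_le.2 hn₀)
  have hA : sInf {s : ℝ | ENNReal.ofReal (q:ℝ) ≤ ν₂ (Set.Iic s)} ≤ t := csInf_le hbdd hhigh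
  -- Step B : t < sInf S₁
  have hiInter1 : (⋂ n : ℕ, Iic (t + ((n:ℝ)+1)⁻¹)) = Iic t := by
    ext x
    simp only [mem_iInter, mem_Iic]
    constructor
    · intro hx
      have hlim : Tendsto (fun n : ℕ => t + ((n:ℝ)+1)⁻¹) atTop (𝓝 (t + 0)) :=
        tendsto_const_nhds.add (tendsto_one_div_add_atTop_nhds_zero_nat.congr (by
          intro n; rw [one_div]))
      have := ge_of_tendsto' hlim hx
      simpa using this
    · intro hx n
      have : (0:ℝ) < ((n:ℝ)+1)⁻¹ := by positivity
      linarith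
  have htend1 : Tendsto (fun n : ℕ => ν₁ (Iic (t + ((n:ℝ)+1)⁻¹))) atTop (𝓝 (ν₁ (Iic t))) := by
    have := tendsto_measure_iInter_atTop (μ := ν₁) (s := fun n : ℕ => Iic (t + ((n:ℝ)+1)⁻¹))
      (fun n => nullMeasurableSet_Iic)
      (fun m n hmn => Iic_subset_Iic.2 (by
        have : ((n:ℝ)+1)⁻¹ ≤ ((m:ℝ)+1)⁻¹ := by
          apply inv_anti₀ (by positivity)
          exact_mod_cast add_le_add_left (Nat.cast_le.2 hmn) 1
        linarith))
      ⟨0, measure_ne_top _ _⟩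
    rw [hiInter1] at this
    exact this
  obtain ⟨n₁, hn₁⟩ := (htend1.eventually_lt_const hlow).exists
  set ε : ℝ := ((n₁:ℝ)+1)⁻¹ with hε
  have hεpos : 0 < ε := by positivity
  have hne : {s : ℝ | ENNReal.ofReal (q:ℝ) ≤ ν₁ (Set.Iic s)}.Nonempty := by
    have h1lt : ENNReal.ofReal (q:ℝ) < 1 := by
      rw [show (1:ℝ≥0∞) = ENNReal.ofReal 1 by simp]
      exact ENNReal.ofReal_lt_ofReal_iff one_pos |>.2 hqlt1
    have : Tendsto (fun s : ℝ => ν₁ (Iic s)) atTop (𝓝 1) := by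
      simpa using tendsto_measure_Iic_atTop ν₁
    obtain ⟨s, hs⟩ := (this.eventually_const_lt h1lt).exists
    exact ⟨s, hs.le⟩
  have hB : t + ε ≤ sInf {s : ℝ | ENNReal.ofReal (q:ℝ) ≤ ν₁ (Set.Iic s)} := by
    refine le_csInf hne fun s hs => ?_
    by_contra hcon
    push_neg at hcon
    exact absurd (le_trans hs (measure_mono (Iic_subset_Iic.2 hcon.le))) (not_le.2 hn₁)
  rw [heq] at hB
  linarith [le_trans hB hA]

lemma measures_eq (ν₁ ν₂ : Measure ℝ) [IsProbabilityMeasure ν₁] [IsProbabilityMeasure ν₂]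
    (h : ∀ q : ℚ, (q:ℝ) ∈ Set.Icc (0:ℝ) 1 →
      sInf {t : ℝ | ENNReal.ofReal (q:ℝ) ≤ ν₁ (Set.Iic t)} =
      sInf {t : ℝ | ENNReal.ofReal (q:ℝ) ≤ ν₂ (Set.Iic t)}) : ν₁ = ν₂ := by
  refine Measure.ext_of_Iic ν₁ ν₂ fun t => le_antisymm ?_ ?_
  · exact not_lt.1 (key_not_lt ν₂ ν₁ (fun q hq => (h q hq).symm) t)
  · exact not_lt.1 (key_not_lt ν₁ ν₂ h t)


/-- If all conditional quantiles of `U` given `(V, W)` coincide (a.s.) with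
those of `U` given `W` alone, for every level `α ∈ [0,1]`, then `U` and `V`
are conditionally independent given `W`, in the sense that the conditional
distribution of `U` given `(V, W)` equals that of `U` given `W` a.s. -/
theorem cond_quantile_eq_implies_cond_indep {Ω : Type*} [MeasurableSpace Ω]
    (μ : Measure Ω) [IsProbabilityMeasure μ]
    (U V W : Ω → ℝ) (hU : Measurable U) (hV : Measurable V) (hW : Measurable W)
    (hquant : ∀ α : ℝ, α ∈ Set.Icc (0:ℝ) 1 →
      ∀ᵐ ω ∂μ,
        sInf {t : ℝ | ENNReal.ofReal α ≤
            condDistrib U (fun ω => (V ω, W ω)) μ (V ω, W ω) (Set.Iic t)} =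
        sInf {t : ℝ | ENNReal.ofReal α ≤
            condDistrib U W μ (W ω) (Set.Iic t)}) :
    ∀ᵐ ω ∂μ,
      condDistrib U (fun ω => (V ω, W ω)) μ (V ω, W ω) =
        condDistrib U W μ (W ω) := by
  have hq : ∀ᵐ ω ∂μ, ∀ q : ℚ, (q:ℝ) ∈ Set.Icc (0:ℝ) 1 →
      sInf {t : ℝ | ENNReal.ofReal (q:ℝ) ≤
          condDistrib U (fun ω => (V ω, W ω)) μ (V ω, W ω) (Set.Iic t)} =
      sInf {t : ℝ | ENNReal.ofReal (q:ℝ) ≤ condDistrib U W μ (W ω) (Set.Iic t)} := by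
    rw [MeasureTheory.ae_all_iff]
    intro q
    by_cases hqmem : (q:ℝ) ∈ Set.Icc (0:ℝ) 1
    · filter_upwards [hquant q hqmem] with ω hω _ using hω
    · filter_upwards with ω hc using absurd hc hqmem
  filter_upwards [hq] with ω hω
  exact measures_eq _ _ hω
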